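/- Kochen–Specker obstruction for the Kernaghan set: there is no assignment f: {1,...,20} → {0,1} of truth values to the 20 Kernaghan vectors in R^4 such that for each of the 11 four-element measurement sets {a,b,c,d} listed in the Kernaghan table, exactly one of f(a), f(b), f(c), f(d) equals 1. -/

import Mathlib

open Finset

/-- The 11 four-element Kernaghan measurements, as columns of indices into the 20 vectors
(0-based indexing). -/
def kernaghan : Fin 11 → Fin 4 → Fin 20 :=
  ![![0,1,2,3], ![0,1,4,5], ![0,2,7,9], ![0,3,13,14],
    ![16,17,18,19], ![16,18,8,9], ![17,18,13,15], ![18,19,4,6],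
    ![14,15,10,11], ![5,6,10,12], ![8,7,12,11]]

/-- Kochen–Specker obstruction for the Kernaghan set: there is no 0/1 truth-value assignment
to the 20 vectors giving exactly one `1` in each of the 11 measurements. -/
theorem stmt_15 :
    ¬ ∃ f : Fin 20 → Bool,
      ∀ c : Fin 11, (univ.filter (fun r : Fin 4 => f (kernaghan c r) = true)).card = 1 := by
  rintro ⟨f, h⟩
  have h' : ∀ c : Fin 11,
      (∑ r : Fin 4, if f (kernaghan c r) = true then 1 else 0) = 1 := by
    intro c
    have := h c
    rwa [Finset.card_filter] at this
  have e0 : kernaghan 0 = ![0,1,2,3] := rfl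
  have e1 : kernaghan 1 = ![0,1,4,5] := rfl
  have e2 : kernaghan 2 = ![0,2,7,9] := rfl
  have e3 : kernaghan 3 = ![0,3,13,14] := rfl
  have e4 : kernaghan 4 = ![16,17,18,19] := rfl
  have e5 : kernaghan 5 = ![16,18,8,9] := rfl
  have e6 : kernaghan 6 = ![17,18,13,15] := rfl
  have e7 : kernaghan 7 = ![18,19,4,6] := rfl
  have e8 : kernaghan 8 = ![14,15,10,11] := rfl
  have e9 : kernaghan 9 = ![5,6,10,12] := rfl
  have e10 : kernaghan 10 = ![8,7,12,11] := rfl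
  simp only [show ∀ (b : Bool) [Decidable (b = true)], (if b = true then (1:ℕ) else 0) = b.toNat from fun b _ => by cases b <;> simp] at h'
  have h0 := h' 0
  have h1 := h' 1
  have h2 := h' 2
  have h3 := h' 3
  have h4 := h' 4
  have h5 := h' 5
  have h6 := h' 6
  have h7 := h' 7
  have h8 := h' 8
  have h9 := h' 9
  have h10 := h' 10
  simp only [e0, e1, e2, e3, e4, e5, e6, e7, e8, e9, e10, Fin.sum_univ_four,
    Matrix.cons_val_zero, Matrix.cons_val_one, Matrix.head_cons, Matrix.cons_val_two,
    Matrix.tail_cons, Matrix.cons_val_three] at h0 h1 h2 h3 h4 h5 h6 h7 h8 h9 h10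
  omega
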